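/- Let H and L be complex Hilbert spaces, j : H → L a bounded linear map, and a : H × H → ℂ a sesquilinear form (linear in the first argument, conjugate-linear in the second). Assume: (continuity) there is C_cont > 0 with |a(u,v)| ≤ C_cont ‖u‖_H ‖v‖_H for all u, v ∈ H; (Gårding inequality) Re a(v,v) ≥ ‖v‖_H² − 2‖j v‖_L² for all v ∈ H; (adjoint solvability) there is a map S* : L → H such that a(v, S*f) = ⟨j v, f⟩_L for all v ∈ H and all f ∈ L. Let H_N ⊆ H be a finite-dimensional subspace and set η(H_N) := sup over nonzero f ∈ L of (inf over v_N ∈ H_N of ‖S*f − v_N‖_H) / ‖f‖_L. If η(H_N) ≤ 1/(2 C_cont), then for every u ∈ H there exists a unique u_N ∈ H_N (the Galerkin solution) satisfying a(u_N, v_N) = a(u, v_N) for all v_N ∈ H_N, and this u_N satisfies the quasi-optimal error bound ‖u − u_N‖_H ≤ 2 C_cont · inf over v_N ∈ H_N of ‖u − v_N‖_H. -/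

import Mathlib

open scoped ComplexConjugate

private lemma my_le_infDist {X : Type*} [MetricSpace X] {s : Set X} (hs : s.Nonempty)
    {x : X} {b : ℝ} (h : ∀ y ∈ s, b ≤ dist x y) : b ≤ Metric.infDist x s := by
  by_contra hlt
  push_neg at hlt
  obtain ⟨y, hy, hd⟩ := (Metric.infDist_lt_iff hs).mp hlt
  exact absurd hd (not_lt.mpr (h y hy))

private lemma schatz_estimate
    {H L : Type*} [NormedAddCommGroup H] [InnerProductSpace ℂ H]
    [NormedAddCommGroup L] [InnerProductSpace ℂ L]
    (j : H →L[ℂ] L) (a : H → H → ℂ)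
    (ha₂ : ∀ u : H, IsLinearMap ℂ (fun v => conj (a u v)))
    (Ccont : ℝ) (hCcont : 0 < Ccont)
    (hcont : ∀ u v : H, ‖a u v‖ ≤ Ccont * ‖u‖ * ‖v‖)
    (hgarding : ∀ v : H, ‖v‖ ^ 2 - 2 * ‖j v‖ ^ 2 ≤ (a v v).re)
    (Sstar : L → H)
    (hS : ∀ (v : H) (f : L), a v (Sstar f) = inner ℂ f (j v))
    (HN : Submodule ℂ H)
    (hη : ∀ f : L, f ≠ 0 → Metric.infDist (Sstar f) (HN : Set H) ≤ ‖f‖ / (2 * Ccont))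
    (u : H) (uN : H) (huN : uN ∈ HN)
    (horth : ∀ v ∈ HN, a (u - uN) v = 0) :
    ‖u - uN‖ ≤ 2 * Ccont * Metric.infDist u (HN : Set H) := by
  set e := u - uN with he_def
  by_cases he : e = 0
  · rw [he, norm_zero]
    have := Metric.infDist_nonneg (x := u) (s := (HN : Set H))
    positivity
  have hepos : (0:ℝ) < ‖e‖ := norm_pos_iff.mpr he
  have hne : (HN : Set H).Nonempty := ⟨0, HN.zero_mem⟩
  -- conj-linear maps in second slot
  -- Step 1: ‖j e‖ ≤ ‖e‖ / 2
  have hje : ‖j e‖ ≤ ‖e‖ / 2 := by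
    by_cases hf : j e = 0
    · rw [hf, norm_zero]; positivity
    set f := j e with hf_def
    have hfpos : (0:ℝ) < ‖f‖ := norm_pos_iff.mpr hf
    have h1 : ∀ vN ∈ HN, ‖f‖ ^ 2 ≤ Ccont * ‖e‖ * ‖Sstar f - vN‖ := by
      intro vN hvN
      have hsplit : conj (a e (Sstar f)) = conj (a e (Sstar f - vN)) + conj (a e vN) := by
        have := (ha₂ e).map_add (Sstar f - vN) vN
        simpa using this
      have hzero : a e vN = 0 := horth vN hvN
      have heq : a e (Sstar f) = a e (Sstar f - vN) := by
        have : conj (a e (Sstar f)) = conj (a e (Sstar f - vN)) := by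
          rw [hsplit, hzero]; simp
        exact star_injective this
      have hval : a e (Sstar f) = inner ℂ f f := by
        rw [hS e f, ← hf_def]
      have hnorm : ‖f‖ ^ 2 = ‖a e (Sstar f - vN)‖ := by
        rw [← heq, hval, inner_self_eq_norm_sq_to_K]
        simp
      rw [hnorm]
      exact hcont e (Sstar f - vN)
    have h2 : ‖f‖ ^ 2 / (Ccont * ‖e‖) ≤ Metric.infDist (Sstar f) (HN : Set H) := by
      apply my_le_infDist hne
      intro y hy
      rw [dist_eq_norm]
      rw [div_le_iff₀ (by positivity)]
      calc ‖f‖ ^ 2 ≤ Ccont * ‖e‖ * ‖Sstar f - y‖ := h1 y hy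
        _ = ‖Sstar f - y‖ * (Ccont * ‖e‖) := by ring
    have h3 := hη f hf
    have h4 : ‖f‖ ^ 2 / (Ccont * ‖e‖) ≤ ‖f‖ / (2 * Ccont) := le_trans h2 h3
    rw [div_le_div_iff₀ (by positivity) (by positivity)] at h4
    nlinarith [mul_pos hfpos hCcont]
  -- Step 2
  have step2 : ∀ vN ∈ HN, ‖e‖ ^ 2 / 2 ≤ Ccont * ‖e‖ * ‖u - vN‖ := by
    intro vN hvN
    have hg := hgarding e
    have hsq : 2 * ‖j e‖ ^ 2 ≤ ‖e‖ ^ 2 / 2 := by nlinarith [norm_nonneg (j e)]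
    have heq : a e e = a e (u - vN) := by
      have hsplit : conj (a e (u - vN)) = conj (a e e) + conj (a e (uN - vN)) := by
        have h := (ha₂ e).map_add e (uN - vN)
        have : u - vN = e + (uN - vN) := by rw [he_def]; abel
        rw [this]
        simpa using h
      have hz : a e (uN - vN) = 0 := horth _ (HN.sub_mem huN hvN)
      have : conj (a e (u - vN)) = conj (a e e) := by rw [hsplit, hz]; simp
      exact (star_injective this).symm
    have hre : (a e (u - vN)).re ≤ ‖a e (u - vN)‖ := by
      exact Complex.re_le_norm _
    have hcb := hcont e (u - vN)
    have : ‖e‖ ^ 2 - 2 * ‖j e‖ ^ 2 ≤ Ccont * ‖e‖ * ‖u - vN‖ := by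
      calc ‖e‖ ^ 2 - 2 * ‖j e‖ ^ 2 ≤ (a e e).re := hg
        _ = (a e (u - vN)).re := by rw [heq]
        _ ≤ ‖a e (u - vN)‖ := hre
        _ ≤ Ccont * ‖e‖ * ‖u - vN‖ := hcb
    linarith
  have h5 : ‖e‖ / (2 * Ccont) ≤ Metric.infDist u (HN : Set H) := by
    apply my_le_infDist hne
    intro y hy
    rw [dist_eq_norm, div_le_iff₀ (by positivity)]
    have := step2 y hy
    nlinarith [hepos]
  rw [div_le_iff₀ (by positivity)] at h5
  linarith [h5]

/-- **The Schatz argument: sufficient conditions for quasi-optimality of the Galerkin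
method.**
Let `H, L` be complex Hilbert spaces, `j : H → L` bounded linear, and `a` a sesquilinear
form on `H` (linear in the first argument, conjugate-linear in the second) that is
continuous with constant `C_cont` and satisfies the Gårding inequality
`Re a(v,v) ≥ ‖v‖² − 2‖jv‖²`.  Let `S* : L → H` solve the adjoint problem
`a(v, S*f) = (jv, f)_L` for all `v, f` (with the `L²`-type pairing, linear in the first
slot, i.e. Mathlib's `⟪f, jv⟫`).  Let `H_N ⊆ H` be a finite-dimensional subspace with
adjoint approximability `η(H_N) ≤ 1/(2C_cont)`, i.e.
`infDist (S*f) H_N ≤ ‖f‖/(2C_cont)` for every `f ≠ 0`.  Then for every `u ∈ H` the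
Galerkin solution `u_N ∈ H_N` (with `a(u_N, v_N) = a(u, v_N)` for all `v_N ∈ H_N`)
exists, is unique, and satisfies `‖u − u_N‖ ≤ 2 C_cont · inf_{v_N ∈ H_N} ‖u − v_N‖`. -/
theorem schatz_quasioptimality
    {H L : Type*} [NormedAddCommGroup H] [InnerProductSpace ℂ H] [CompleteSpace H]
    [NormedAddCommGroup L] [InnerProductSpace ℂ L] [CompleteSpace L]
    (j : H →L[ℂ] L) (a : H → H → ℂ)
    (ha₁ : ∀ v : H, IsLinearMap ℂ (fun u => a u v))
    (ha₂ : ∀ u : H, IsLinearMap ℂ (fun v => conj (a u v)))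
    (Ccont : ℝ) (hCcont : 0 < Ccont)
    (hcont : ∀ u v : H, ‖a u v‖ ≤ Ccont * ‖u‖ * ‖v‖)
    (hgarding : ∀ v : H, ‖v‖ ^ 2 - 2 * ‖j v‖ ^ 2 ≤ (a v v).re)
    (Sstar : L → H)
    (hS : ∀ (v : H) (f : L), a v (Sstar f) = inner ℂ f (j v))
    (HN : Submodule ℂ H) [FiniteDimensional ℂ HN]
    (hη : ∀ f : L, f ≠ 0 → Metric.infDist (Sstar f) (HN : Set H) ≤ ‖f‖ / (2 * Ccont))
    (u : H) :
    ∃ uN ∈ HN,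
      (∀ vN ∈ HN, a uN vN = a u vN) ∧
      ‖u - uN‖ ≤ 2 * Ccont * Metric.infDist u (HN : Set H) ∧
      ∀ wN ∈ HN, (∀ vN ∈ HN, a wN vN = a u vN) → wN = uN := by
  haveI : CompleteSpace HN := FiniteDimensional.complete ℂ HN
  -- uniqueness core: discrete functions orthogonal to HN are zero
  have uniq : ∀ w ∈ HN, (∀ v ∈ HN, a w v = 0) → w = 0 := by
    intro w hw h0
    have horth : ∀ v ∈ HN, a ((0:H) - w) v = 0 := by
      intro v hv
      have : a ((0:H) - w) v = a 0 v - a w v := ((ha₁ v).mk').map_sub 0 w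
      rw [this, (ha₁ v).map_zero, h0 v hv, sub_zero]
    have hest := schatz_estimate j a ha₂ Ccont hCcont hcont hgarding Sstar hS HN hη
      0 w hw horth
    rw [Metric.infDist_zero_of_mem HN.zero_mem, mul_zero] at hest
    have : ‖(0:H) - w‖ = ‖w‖ := by simp
    rw [this] at hest
    exact norm_le_zero_iff.mp hest
  -- Riesz representation machinery on HN
  let φ : H → (HN →L[ℂ] ℂ) := fun w =>
    LinearMap.mkContinuous
      { toFun := fun v : HN => conj (a w (v : H))
        map_add' := fun x y => by simpa using (ha₂ w).map_add (x : H) (y : H)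
        map_smul' := fun c x => by simpa using (ha₂ w).map_smul c (x : H) }
      (Ccont * ‖w‖)
      (fun v => by
        have h := hcont w (v : H)
        calc ‖conj (a w (v : H))‖ = ‖a w (v : H)‖ := by simp
          _ ≤ Ccont * ‖w‖ * ‖(v : H)‖ := h
          _ = Ccont * ‖w‖ * ‖v‖ := by rw [Submodule.norm_coe])
  let F : H → HN := fun w => (InnerProductSpace.toDual ℂ HN).symm (φ w)
  have hF : ∀ (w : H) (v : HN), (inner ℂ (F w) v : ℂ) = conj (a w (v : H)) := fun w v =>
    InnerProductSpace.toDual_symm_apply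
  have hFadd : ∀ w w' : H, F (w + w') = F w + F w' := by
    intro w w'
    apply ext_inner_right ℂ
    intro v
    rw [inner_add_left, hF, hF, hF]
    rw [(ha₁ (v : H)).map_add]
    simp
  have hFsmul : ∀ (c : ℂ) (w : H), F (c • w) = c • F w := by
    intro c w
    apply ext_inner_right ℂ
    intro v
    rw [inner_smul_left, hF, hF]
    rw [(ha₁ (v : H)).map_smul]
    simp [mul_comm]
  let G : HN →ₗ[ℂ] HN :=
    { toFun := fun w => F (w : H)
      map_add' := fun x y => by simp only [Submodule.coe_add, hFadd]
      map_smul' := fun c x => by simp only [Submodule.coe_smul, hFsmul, RingHom.id_apply] }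
  have hGinj : Function.Injective G := by
    rw [← LinearMap.ker_eq_bot, LinearMap.ker_eq_bot']
    intro w hw
    have h0 : ∀ v ∈ HN, a (w : H) v = 0 := by
      intro v hv
      have := hF (w : H) ⟨v, hv⟩
      have hGw : F (w : H) = 0 := hw
      rw [hGw, inner_zero_left] at this
      have : conj (a (w : H) v) = 0 := this.symm
      simpa using star_injective (by simpa using this : conj (a (w : H) v) = conj 0)
    have : (w : H) = 0 := uniq (w : H) w.2 h0
    exact Subtype.ext this
  have hGsurj : Function.Surjective G := LinearMap.injective_iff_surjective.mp hGinj
  obtain ⟨wN, hwN⟩ := hGsurj (F u)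
  have hsol : ∀ v ∈ HN, a (wN : H) v = a u v := by
    intro v hv
    have h1 := hF (wN : H) ⟨v, hv⟩
    have h2 := hF u ⟨v, hv⟩
    have : (inner ℂ (G wN) (⟨v, hv⟩ : HN) : ℂ) = inner ℂ (F u) (⟨v, hv⟩ : HN) := by rw [hwN]
    have hc : conj (a (wN : H) v) = conj (a u v) := by
      rw [← h1, ← h2]; exact this
    exact star_injective hc
  refine ⟨(wN : H), wN.2, hsol, ?_, ?_⟩
  · -- quasi-optimality
    have horth : ∀ v ∈ HN, a (u - (wN : H)) v = 0 := by
      intro v hv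
      have : a (u - (wN : H)) v = a u v - a (wN : H) v := ((ha₁ v).mk').map_sub u (wN : H)
      rw [this, hsol v hv, sub_self]
    exact schatz_estimate j a ha₂ Ccont hCcont hcont hgarding Sstar hS HN hη
      u (wN : H) wN.2 horth
  · -- uniqueness
    intro wN' hwN' hsol'
    have hd : ∀ v ∈ HN, a (wN' - (wN : H)) v = 0 := by
      intro v hv
      have : a (wN' - (wN : H)) v = a wN' v - a (wN : H) v :=
        ((ha₁ v).mk').map_sub wN' (wN : H)
      rw [this, hsol' v hv, hsol v hv, sub_self]
    have := uniq _ (HN.sub_mem hwN' wN.2) hd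
    exact sub_eq_zero.mp this
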